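/- If a great circle C lies in the Clifford torus T = {p ∈ S³ : p₁p₃ = p₂p₄}, then the polar great circle of C (the set of points of S³ at distance π/2 from every point of C) also lies in T. -/

import Mathlib

open Real

noncomputable abbrev E4 := EuclideanSpace ℝ (Fin 4)

def sphere3' : Set E4 := {p | ∑ i, p i ^ 2 = 1}

/-- The Clifford torus T = {p ∈ S³ : p₁p₃ = p₂p₄}. -/
def cliffordT' : Set E4 := {p ∈ sphere3' | p 0 * p 2 = p 1 * p 3}

/-- The symmetric orthogonal involution swapping coordinates 0↔2 and 1↔-3. -/
noncomputable def Jmap : E4 →ₗ[ℝ] E4 where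
  toFun p := WithLp.toLp 2 ![p 2, -p 3, p 0, -p 1]
  map_add' p q := by
    ext i
    fin_cases i <;> simp [PiLp.add_apply] <;> ring
  map_smul' c p := by
    ext i
    fin_cases i <;> simp [PiLp.smul_apply]

lemma norm_sq_E4 (v : E4) : ∑ i, v i ^ 2 = ‖v‖ ^ 2 := by
  rw [← real_inner_self_eq_norm_sq]
  simp [PiLp.inner_apply, RCLike.inner_apply, sq]
  rw [EuclideanSpace.norm_eq, Real.mul_self_sqrt (Finset.sum_nonneg fun i _ => by positivity)]
  simp [sq]

/-- If a great circle S³ ∩ V lies in the Clifford torus T, then so does its polar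
great circle S³ ∩ V^⊥. -/
theorem stmt_18 (V : Submodule ℝ E4) (hV : Module.finrank ℝ V = 2)
    (hC : sphere3' ∩ (V : Set E4) ⊆ cliffordT') :
    sphere3' ∩ (Vᗮ : Set E4) ⊆ cliffordT' := by
  -- Step 1: the quadratic form vanishes on all of V
  have hQ : ∀ v ∈ V, v 0 * v 2 = v 1 * v 3 := by
    intro v hv
    rcases eq_or_ne v 0 with rfl | hv0
    · simp
    · have hn : (‖v‖ : ℝ) ≠ 0 := norm_ne_zero_iff.mpr hv0
      have hus : (‖v‖⁻¹ • v : E4) ∈ sphere3' := by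
        show ∑ i, ((‖v‖⁻¹ • v : E4) i) ^ 2 = 1
        have : ∀ i, ((‖v‖⁻¹ • v : E4) i) ^ 2 = ‖v‖⁻¹ ^ 2 * v i ^ 2 := by
          intro i; simp [PiLp.smul_apply, mul_pow]
        rw [Finset.sum_congr rfl fun i _ => this i, ← Finset.mul_sum, norm_sq_E4]
        field_simp
      have h2 := (hC ⟨hus, V.smul_mem _ hv⟩).2
      simp only [PiLp.smul_apply, smul_eq_mul] at h2
      have h3 : ‖v‖⁻¹ * ‖v‖⁻¹ * (v 0 * v 2) = ‖v‖⁻¹ * ‖v‖⁻¹ * (v 1 * v 3) := by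
        linarith [h2]
      have h4 : ‖v‖⁻¹ * ‖v‖⁻¹ ≠ 0 := by positivity
      exact mul_left_cancel₀ h4 h3
  -- Step 2: the associated bilinear form vanishes on V, i.e. Jmap v ⊥ w
  have hJV : V.map Jmap ≤ Vᗮ := by
    rintro _ ⟨v, hv, rfl⟩
    rw [Submodule.mem_orthogonal]
    intro w hw
    have hvw := hQ _ (V.add_mem hv hw)
    have h1 := hQ v hv
    have h2 := hQ w hw
    simp only [PiLp.add_apply] at hvw
    have : (inner ℝ w (Jmap v) : ℝ) = ∑ i, w i * Jmap v i := by
      simp [PiLp.inner_apply, RCLike.inner_apply, mul_comm]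
    rw [this, Fin.sum_univ_four]
    show w 0 * v 2 + w 1 * (-v 3) + w 2 * v 0 + w 3 * (-v 1) = 0
    nlinarith [hvw, h1, h2]
  -- Step 3: equality by dimension count
  have hJJ : Jmap.comp Jmap = LinearMap.id := by
    ext p i
    fin_cases i <;> simp [Jmap]
  have hdim : Module.finrank ℝ (V.map Jmap) = Module.finrank ℝ Vᗮ := by
    have e1 : Module.finrank ℝ (V.map Jmap) = 2 := by
      exact (LinearEquiv.finrank_map_eq (LinearEquiv.ofLinear Jmap Jmap hJJ hJJ) V).trans hV
    have e2 : Module.finrank ℝ Vᗮ = 2 := by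
      have := Submodule.finrank_add_finrank_orthogonal (K := V)
      have h4 : Module.finrank ℝ E4 = 4 := by
        simp [finrank_euclideanSpace]
      omega
    rw [e1, e2]
  have heq : V.map Jmap = Vᗮ := Submodule.eq_of_le_of_finrank_eq hJV hdim
  rintro p ⟨hps, hpV⟩
  rw [← heq] at hpV
  obtain ⟨v, hv, rfl⟩ := hpV
  refine ⟨hps, ?_⟩
  show v 2 * v 0 = -v 3 * -v 1
  have := hQ v hv
  nlinarith [this]
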